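/- arXiv:0811.0289 — 3 statements merged into one kernel-verified Lean document; each statement's English description precedes it below -/
import Mathlib

section
/- Let A be a symmetric n×n real matrix with rows w_1,…,w_n, each of Euclidean norm at least 1, and suppose the normalized inner products satisfy |⟨w_i,w_j⟩|/(‖w_i‖‖w_j‖) ≤ c₁ j^{-δ} for all i < j, where δ > 5/4. If the constant c₁ is small enough (explicitly, if 1 − c₁²/4^δ − c₁c₂ · 2^{5/2−2δ}/(2δ−5/2) > 0 with c₂ = c₁ exp((15/6)c₁²)), then |det A| ≥ q ∏_{j=1}^n ‖w_j‖ for some q ∈ (0,1) independent of n. -/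
open Finset Real

-- key pointwise exp bound
lemma exp_le_one_add {s μ : ℝ} (hs : s < 1) (hμ : |μ| ≤ s) :
    Real.exp (μ - μ ^ 2 / (1 - s)) ≤ 1 + μ := by
  have h1 : 0 < 1 + μ := by
    have := abs_le.mp hμ; nlinarith [this.1]
  have h2 : Real.exp (-(μ / (1 + μ))) ≥ 1 - μ / (1 + μ) := by
    have := Real.add_one_le_exp (-(μ / (1 + μ))); linarith
  have h3 : Real.exp (μ / (1 + μ)) ≤ 1 + μ := by
    have hinv : 1 - μ / (1 + μ) = (1 + μ)⁻¹ := by field_simp; ring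
    rw [hinv] at h2
    have := Real.exp_pos (μ / (1 + μ))
    rw [Real.exp_neg] at h2
    have h4 : (1 + μ)⁻¹ > 0 := by positivity
    calc Real.exp (μ / (1 + μ)) = ((Real.exp (μ / (1 + μ)))⁻¹)⁻¹ := by simp
      _ ≤ ((1+μ)⁻¹)⁻¹ := by
          apply inv_anti₀ h4 h2
      _ = 1 + μ := by simp
  refine le_trans (Real.exp_le_exp.mpr ?_) h3
  have hmono : μ - μ ^ 2 / (1 - s) ≤ μ - μ ^ 2 / (1 + μ) := by
    have hs1 : 0 < 1 - s := by linarith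
    have : μ ^ 2 / (1 + μ) ≤ μ ^ 2 / (1 - s) := by
      have hb := (abs_le.mp hμ).1
      exact div_le_div_of_nonneg_left (sq_nonneg μ) hs1 (by linarith)
    linarith
  have : μ - μ ^ 2 / (1 + μ) = μ / (1 + μ) := by field_simp; ring
  linarith

-- telescoping bound : (x+1)^{-(q+1)} ≤ (x^{-q} - (x+1)^{-q})/q for x ≥ 1, q > 0
lemma telescope {q x : ℝ} (hq : 0 < q) (hx : 1 ≤ x) :
    (x + 1) ^ (-(q + 1)) ≤ (x ^ (-q) - (x + 1) ^ (-q)) / q := by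
  have hx0 : 0 < x := by linarith
  have hx1 : 0 < x + 1 := by linarith
  have hlog : 1 / (x + 1) ≤ Real.log ((x + 1) / x) := by
    have h := Real.one_sub_inv_le_log_of_pos (show 0 < (x+1)/x by positivity)
    have : 1 - ((x+1)/x)⁻¹ = 1/(x+1) := by field_simp; ring
    linarith [h, this ▸ h]
  have hpow : 1 + q / (x + 1) ≤ ((x + 1) / x) ^ q := by
    have h1 : ((x+1)/x) ^ q = Real.exp (q * Real.log ((x+1)/x)) := by
      rw [Real.rpow_def_of_pos (by positivity), mul_comm]
    rw [h1]
    have := Real.add_one_le_exp (q * Real.log ((x+1)/x))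
    have h2 : q / (x+1) ≤ q * Real.log ((x+1)/x) := by
      rw [div_eq_mul_inv]
      exact mul_le_mul_of_nonneg_left (by simpa [one_div] using hlog) hq.le
    linarith
  -- multiply out
  have hxq : (0:ℝ) < (x+1) ^ (-q) := Real.rpow_pos_of_pos hx1 _
  have key : q * (x + 1) ^ (-(q+1)) ≤ x ^ (-q) - (x + 1) ^ (-q) := by
    have hdiv : x ^ (-q) = (x+1) ^ (-q) * ((x+1)/x) ^ q := by
      rw [Real.div_rpow (by positivity) hx0.le, Real.rpow_neg hx0.le, Real.rpow_neg hx1.le]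
      field_simp
    have hsplit : (x+1) ^ (-(q+1)) = (x+1) ^ (-q) / (x+1) := by
      rw [show -(q+1) = -q + (-1) from by ring, Real.rpow_add hx1, Real.rpow_neg_one]
      field_simp
    rw [hdiv, hsplit]
    have := mul_le_mul_of_nonneg_left hpow hxq.le
    calc q * ((x+1)^(-q) / (x+1)) = (x+1)^(-q) * (q/(x+1)) := by ring
      _ ≤ (x+1)^(-q) * ((x+1)/x)^q - (x+1)^(-q) := by nlinarith
      _ = (x+1)^(-q) * ((x+1)/x)^q - (x+1)^(-q) := rfl
  rw [le_div_iff₀ hq]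
  linarith

lemma series_bound {p : ℝ} (hp : 2 < p) (n : ℕ) :
    ∑ j ∈ Finset.range n, (j : ℝ) * ((j : ℝ) + 1) ^ (-p) ≤
      (2:ℝ) ^ (-p) + (2:ℝ) ^ (-(p-2)) / (p-2) := by
  set q : ℝ := p - 2 with hqdef
  have hq : 0 < q := by simp [hqdef]; linarith
  have main : ∀ m : ℕ, 2 ≤ m →
      ∑ j ∈ Finset.range m, (j : ℝ) * ((j : ℝ) + 1) ^ (-p) ≤
        (2:ℝ) ^ (-p) + ((2:ℝ) ^ (-q) - (m:ℝ) ^ (-q)) / q := by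
    intro m hm
    induction m with
    | zero => omega
    | succ k ih =>
      rcases Nat.lt_or_ge k 2 with hk | hk
      · interval_cases k
        · omega
        · -- m = 2
          norm_num [Finset.sum_range_succ]
      · have ihk := ih hk
        rw [Finset.sum_range_succ]
        have hk1 : (1:ℝ) ≤ (k:ℝ) := by exact_mod_cast Nat.one_le_of_lt hk
        have hstep : (k : ℝ) * ((k : ℝ) + 1) ^ (-p) ≤
            (((k:ℝ)) ^ (-q) - ((k:ℝ) + 1) ^ (-q)) / q := by
          have h1 : (k : ℝ) * ((k : ℝ) + 1) ^ (-p) ≤ ((k:ℝ) + 1) ^ (-(q+1)) := by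
            have hpos : (0:ℝ) < ((k:ℝ)+1) ^ (-p) := Real.rpow_pos_of_pos (by linarith) _
            have : ((k:ℝ)+1) ^ (-(q+1)) = ((k:ℝ)+1) * ((k:ℝ)+1) ^ (-p) := by
              rw [show -(q+1) = 1 + (-p) from by simp [hqdef]; ring,
                Real.rpow_add (by linarith), Real.rpow_one]
            rw [this]
            nlinarith
          exact h1.trans (telescope hq hk1)
        have hcast : ((k:ℝ) + 1) = ((k+1 : ℕ) : ℝ) := by push_cast; ring
        calc ∑ j ∈ Finset.range k, (j:ℝ) * ((j:ℝ)+1) ^ (-p) + (k:ℝ)*((k:ℝ)+1)^(-p)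
            ≤ ((2:ℝ)^(-p) + ((2:ℝ)^(-q) - (k:ℝ)^(-q))/q) + ((k:ℝ)^(-q) - ((k:ℝ)+1)^(-q))/q := by
              linarith
          _ = (2:ℝ)^(-p) + ((2:ℝ)^(-q) - (((k:ℕ)+1:ℝ))^(-q))/q := by push_cast; ring
          _ = (2:ℝ)^(-p) + ((2:ℝ)^(-q) - ((k+1:ℕ):ℝ)^(-q))/q := by norm_cast
  rcases Nat.lt_or_ge n 2 with hn | hn
  · have h0 : ∑ j ∈ Finset.range n, (j : ℝ) * ((j : ℝ) + 1) ^ (-p) = 0 := by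
      interval_cases n <;> simp
    rw [h0]
    positivity
  · refine (main n hn).trans ?_
    have : (0:ℝ) ≤ (n:ℝ) ^ (-q) := Real.rpow_nonneg (by positivity) _
    have h2 : ((2:ℝ)^(-q) - (n:ℝ)^(-q))/q ≤ (2:ℝ)^(-q)/q := by
      gcongr
      linarith
    linarith

lemma two_rpow_lb (u : ℝ) (hu : 0 < u) : 1 + u/2 ≤ (2:ℝ) ^ u := by
  have h1 : (2:ℝ) ^ u = Real.exp (Real.log 2 * u) := by
    rw [Real.rpow_def_of_pos two_pos]
  have h2 := Real.add_one_le_exp (Real.log 2 * u)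
  have h3 : (0.6931471803 : ℝ) < Real.log 2 := Real.log_two_gt_d9
  nlinarith [mul_lt_mul_of_pos_right h3 hu]

lemma sqrt32_lb (s₀ : ℝ) (hs00 : 0 < s₀) (hs0sq : s₀ ^ 2 = 32) : (5.65:ℝ) ≤ s₀ := by
  nlinarith

lemma poly_contra (u v E s₀ t : ℝ) (hu : 0 < u) (hv0 : 0 < v) (hs00 : 0 < s₀)
    (hs0sq : s₀ ^ 2 = 32) (hs0ge : 5.65 ≤ s₀) (htge : 1 + u/2 ≤ t)
    (hEge : 1 + 5/2 * (v * t * s₀) ≤ E)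
    (g1 : u + 1/2 ≤ 2 * v * (u + 9/2)) (g2 : v * u + v * E * s₀ < u) : False := by
  have hEb : 5.65 * v + 80 * v^2 + 40 * v^2 * u ≤ v * E * s₀ := by
    have h1 : v * s₀ * (1 + (5/2) * (v * t * s₀)) ≤ v * s₀ * E :=
      mul_le_mul_of_nonneg_left hEge (by positivity)
    have h2 : v * s₀ * (1 + (5/2) * (v * t * s₀)) = v * s₀ + (5/2) * v^2 * t * s₀^2 := by ring
    have h3 : v * s₀ + 80 * v^2 * t ≤ v * s₀ * E := by
      rw [h2, hs0sq] at h1; nlinarith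
    have h4 : 80 * v^2 * (1 + u/2) ≤ 80 * v^2 * t :=
      mul_le_mul_of_nonneg_left htge (by positivity)
    nlinarith [mul_le_mul_of_nonneg_left hs0ge hv0.le]
  have B : v * u + 5.65 * v + 80 * v^2 + 40 * v^2 * u < u := by nlinarith
  have t1 : u * (u + 1/2) * (2*(u + 9/2)) ≤ u * (2*v*(u+9/2)) * (2*(u+9/2)) := by
    apply mul_le_mul_of_nonneg_right _ (by positivity)
    exact mul_le_mul_of_nonneg_left g1 hu.le
  have t2 : 5.65 * ((u + 1/2) * (2*(u + 9/2))) ≤ 5.65 * ((2*v*(u+9/2)) * (2*(u+9/2))) := by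
    apply mul_le_mul_of_nonneg_left _ (by norm_num)
    exact mul_le_mul_of_nonneg_right g1 (by positivity)
  have t3 : (u + 1/2)^2 ≤ (2*v*(u+9/2))^2 := by
    apply sq_le_sq' _ g1
    nlinarith
  have t4 : u * (u + 1/2)^2 ≤ u * (2*v*(u+9/2))^2 :=
    mul_le_mul_of_nonneg_left t3 hu.le
  have t5 : (v * u + 5.65 * v + 80 * v^2 + 40 * v^2 * u) * (4*(u+9/2)^2) <
      u * (4*(u+9/2)^2) :=
    mul_lt_mul_of_pos_right B (by positivity)
  nlinarith [t1, t2, t3, t4, t5, hu, sq_nonneg u, mul_pos hu hu]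

lemma small_arith (δ c₁ : ℝ) (hδ : 5 / 4 < δ) (hc₁ : 0 < c₁)
    (hsmall :
      0 < 1 - c₁ ^ 2 / (4 : ℝ) ^ δ -
        c₁ * (c₁ * Real.exp ((15 / 6) * c₁ ^ 2)) *
          (2 : ℝ) ^ ((5 : ℝ) / 2 - 2 * δ) / (2 * δ - 5 / 2)) :
    2 * c₁ ^ 2 * ((2 : ℝ) ^ (-(2 * δ)) + (2 : ℝ) ^ (-(2 * δ - 2)) / (2 * δ - 2)) < 1 := by
  set p : ℝ := 2 * δ with hp
  have hu : 0 < p - 5/2 := by simp only [hp]; linarith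
  set u : ℝ := p - 5/2 with hudef
  set w : ℝ := (2:ℝ) ^ (-p) with hw
  set s₀ : ℝ := (2:ℝ) ^ ((5:ℝ)/2) with hs₀
  set t : ℝ := (2:ℝ) ^ u with ht
  set E : ℝ := Real.exp ((15/6) * c₁ ^ 2) with hE
  set a : ℝ := c₁ ^ 2 with ha
  have ha0 : 0 < a := by positivity
  have hw0 : 0 < w := Real.rpow_pos_of_pos two_pos _
  have hs00 : 0 < s₀ := Real.rpow_pos_of_pos two_pos _
  have ht0 : 0 < t := Real.rpow_pos_of_pos two_pos _
  have hE0 : 0 < E := Real.exp_pos _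
  have h4 : (4:ℝ) ^ δ = (2:ℝ) ^ p := by
    rw [show (4:ℝ) = (2:ℝ) ^ (2:ℝ) by
      rw [show (2:ℝ) = ((2:ℕ):ℝ) from by norm_num, Real.rpow_natCast]; norm_num,
      ← Real.rpow_mul (by norm_num)]
  have hwinv : (2:ℝ) ^ p = w⁻¹ := by
    rw [hw, ← Real.rpow_neg (by norm_num), neg_neg]
  have h52 : (2:ℝ) ^ ((5:ℝ)/2 - p) = s₀ * w := by
    rw [hs₀, hw, ← Real.rpow_add two_pos]; ring_nf
  have hwts : w * t * s₀ = 1 := by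
    rw [hw, ht, hs₀, ← Real.rpow_add two_pos, ← Real.rpow_add two_pos]
    rw [show -p + u + (5:ℝ)/2 = 0 by rw [hudef]; ring, Real.rpow_zero]
  have htge : 1 + u/2 ≤ t := by
    rw [ht]; exact two_rpow_lb u hu
  have hEge : 1 + (5/2) * a ≤ E := by
    have := Real.add_one_le_exp ((15/6) * c₁ ^ 2)
    rw [hE, ha]; linarith
  have hs0sq : s₀ ^ 2 = 32 := by
    rw [hs₀, ← Real.rpow_natCast ((2:ℝ) ^ ((5:ℝ)/2)) 2, ← Real.rpow_mul (by norm_num)]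
    rw [show (5:ℝ)/2 * (2:ℕ) = ((5:ℕ):ℝ) by push_cast; ring, Real.rpow_natCast]; norm_num
  have hs0ge : (5.65 : ℝ) ≤ s₀ := sqrt32_lb s₀ hs00 hs0sq
  have hH : a * w + a * E * (s₀ * w) / u < 1 := by
    have e1 : c₁ ^ 2 / (4:ℝ) ^ δ = a * w := by
      rw [h4, hwinv, ha]; field_simp
    have e2 : c₁ * (c₁ * E) * (2:ℝ) ^ ((5:ℝ)/2 - 2*δ) / (2*δ - 5/2) =
        a * E * (s₀ * w) / u := by
      rw [show (5:ℝ)/2 - 2*δ = (5:ℝ)/2 - p by rw [hp], h52, hudef, hp, ha]; ring_nf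
    rw [e1, e2] at hsmall
    linarith
  by_contra hcon
  push_neg at hcon
  have hpw : (2:ℝ) ^ (-(p - 2)) = 4 * w := by
    rw [hw, show (4:ℝ) = (2:ℝ)^(2:ℝ) by
      rw [show (2:ℝ) = ((2:ℕ):ℝ) from by norm_num, Real.rpow_natCast]; norm_num,
      ← Real.rpow_add two_pos]
    ring_nf
  rw [hpw] at hcon
  have hu2 : (0:ℝ) < u + 1/2 := by linarith
  have hp2 : p - 2 = u + 1/2 := by rw [hudef]; ring
  rw [hp2] at hcon
  set v : ℝ := a * w with hv
  have hv0 : 0 < v := by positivity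
  have g1 : u + 1/2 ≤ 2 * v * (u + 9/2) := by
    have h := mul_le_mul_of_nonneg_right hcon hu2.le
    have e : 2 * a * (w + 4 * w / (u + 1/2)) * (u + 1/2)
        = 2 * v * (u + 9/2) := by field_simp [hv]; ring
    rw [e, one_mul] at h
    exact h
  have g2 : v * u + v * E * s₀ < u := by
    have h := mul_lt_mul_of_pos_right hH hu
    have e : (a * w + a * E * (s₀ * w) / u) * u = v * u + v * E * s₀ := by
      field_simp [hv]; ring
    rw [e, one_mul] at h
    exact h
  have hva : a = v * t * s₀ := by
    rw [hv]
    calc a = a * (w * t * s₀) := by rw [hwts]; ring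
      _ = a * w * t * s₀ := by ring
  exact poly_contra u v E s₀ t hu hv0 hs00 hs0sq hs0ge htge (by rw [← hva]; exact hEge) g1 g2

section spectral
variable {n : ℕ} (B : Matrix (Fin n) (Fin n) ℝ) (hB : B.IsHermitian)

lemma trace_eq_sum_eigen : B.trace = ∑ i, hB.eigenvalues i := by
  set U : Matrix (Fin n) (Fin n) ℝ := (hB.eigenvectorUnitary : Matrix (Fin n) (Fin n) ℝ)
  set D : Matrix (Fin n) (Fin n) ℝ := Matrix.diagonal (RCLike.ofReal ∘ hB.eigenvalues)
  have hUU : star U * U = 1 := Matrix.mem_unitaryGroup_iff'.mp hB.eigenvectorUnitary.2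
  calc B.trace = (U * D * star U).trace := by rw [show B = U * D * star U from hB.spectral_theorem]
    _ = (star U * (U * D)).trace := Matrix.trace_mul_comm (U * D) (star U)
    _ = ((star U * U) * D).trace := by rw [mul_assoc]
    _ = D.trace := by rw [hUU, one_mul]
    _ = ∑ i, hB.eigenvalues i := by simp [D, Matrix.trace_diagonal]

lemma trace_sq_eq_sum_eigen_sq : (B * B).trace = ∑ i, hB.eigenvalues i ^ 2 := by
  set U : Matrix (Fin n) (Fin n) ℝ := (hB.eigenvectorUnitary : Matrix (Fin n) (Fin n) ℝ)
  set D : Matrix (Fin n) (Fin n) ℝ := Matrix.diagonal (RCLike.ofReal ∘ hB.eigenvalues)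
  have hUU : star U * U = 1 := Matrix.mem_unitaryGroup_iff'.mp hB.eigenvectorUnitary.2
  have hBB : B * B = U * (D * D) * star U := by
    conv_lhs => rw [show B = U * D * star U from hB.spectral_theorem]
    rw [show U * D * star U * (U * D * star U) = U * D * (star U * U) * D * star U by
      simp only [mul_assoc], hUU]
    simp only [mul_one, mul_assoc]
  calc (B * B).trace = (U * (D * D) * star U).trace := by rw [hBB]
    _ = (star U * (U * (D * D))).trace := Matrix.trace_mul_comm _ _
    _ = ((star U * U) * (D * D)).trace := by rw [mul_assoc]
    _ = (D * D).trace := by rw [hUU, one_mul]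
    _ = ∑ i, hB.eigenvalues i ^ 2 := by
        simp [D, Matrix.diagonal_mul_diagonal, Matrix.trace_diagonal, sq]

lemma det_lb_of_traces (hB : B.IsHermitian) (r : ℝ) (hr0 : 0 < r) (hr1 : r < 1)
    (htr : B.trace = (n : ℝ)) (htr2 : (B * B).trace ≤ (n : ℝ) + r) :
    Real.exp (-(r / (1 - Real.sqrt r))) ≤ B.det := by
  set s := Real.sqrt r with hs
  have hs0 : 0 ≤ s := Real.sqrt_nonneg r
  have hssq : s ^ 2 = r := Real.sq_sqrt hr0.le
  have hs1 : s < 1 := by nlinarith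
  set lam := hB.eigenvalues with hlam
  have h1 : ∑ i, lam i = n := by rw [← trace_eq_sum_eigen B hB, htr]
  have h2 : ∑ i, lam i ^ 2 ≤ (n : ℝ) + r := by
    rw [← trace_sq_eq_sum_eigen_sq B hB]; exact htr2
  set μ : Fin n → ℝ := fun i => lam i - 1 with hμ
  have hμsum : ∑ i, μ i = 0 := by
    simp only [hμ, Finset.sum_sub_distrib, h1, Finset.sum_const, Finset.card_univ,
      Fintype.card_fin, nsmul_eq_mul, mul_one, sub_self]
  have hμsq : ∑ i, μ i ^ 2 ≤ r := by
    have e : ∀ i : Fin n, μ i ^ 2 = lam i ^ 2 - 2 * lam i + 1 := by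
      intro i; simp only [hμ]; ring
    have e2 : ∑ i, μ i ^ 2 = (∑ i, lam i ^ 2) - 2 * (∑ i, lam i) + n := by
      rw [Finset.sum_congr rfl (fun i _ => e i), Finset.sum_add_distrib,
        Finset.sum_sub_distrib, ← Finset.mul_sum]
      simp
    rw [e2, h1]; linarith
  have hμabs : ∀ i, |μ i| ≤ s := by
    intro i
    have h3 : μ i ^ 2 ≤ r := by
      have h4 := Finset.single_le_sum (f := fun i => μ i ^ 2)
        (fun i _ => sq_nonneg (μ i)) (Finset.mem_univ i)
      exact le_trans (by simpa using h4) hμsq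
    have := Real.sqrt_le_sqrt h3
    rwa [Real.sqrt_sq_eq_abs] at this
  have hdet : B.det = ∏ i, lam i := by
    rw [hB.det_eq_prod_eigenvalues]; norm_num; rfl
  rw [hdet]
  calc Real.exp (-(r / (1 - s)))
      ≤ Real.exp (∑ i, (μ i - μ i ^ 2 / (1 - s))) := by
        apply Real.exp_le_exp.mpr
        rw [Finset.sum_sub_distrib, hμsum, ← Finset.sum_div, zero_sub, neg_le_neg_iff]
        exact div_le_div_of_nonneg_right hμsq (by linarith)
    _ = ∏ i, Real.exp (μ i - μ i ^ 2 / (1 - s)) := Real.exp_sum _ _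
    _ ≤ ∏ i, (1 + μ i) := by
        apply Finset.prod_le_prod (fun i _ => (Real.exp_pos _).le)
        exact fun i _ => exp_le_one_add hs1 (hμabs i)
    _ = ∏ i, lam i := by simp [hμ]

end spectral

/-- Lemma 2 of the paper: a quantitative lower bound on the determinant of a
symmetric matrix whose rows have norms at least `1` and whose normalized
off-diagonal inner products decay like `c₁ j^{-δ}` with `δ > 5/4` and `c₁`
sufficiently small.  The constant `q ∈ (0,1)` is independent of the
dimension `n`. -/
theorem det_lower_bound_of_almost_orthogonal_rows
    (δ c₁ : ℝ) (hδ : 5 / 4 < δ) (hc₁ : 0 < c₁)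
    (hsmall :
      0 < 1 - c₁ ^ 2 / (4 : ℝ) ^ δ -
        c₁ * (c₁ * Real.exp ((15 / 6) * c₁ ^ 2)) *
          (2 : ℝ) ^ ((5 : ℝ) / 2 - 2 * δ) / (2 * δ - 5 / 2)) :
    ∃ q ∈ Set.Ioo (0 : ℝ) 1, ∀ (n : ℕ) (A : Matrix (Fin n) (Fin n) ℝ),
      A.IsSymm →
      (∀ i : Fin n, 1 ≤ Real.sqrt (∑ k, A i k ^ 2)) →
      (∀ i j : Fin n, i < j →
        |∑ k, A i k * A j k| /
            (Real.sqrt (∑ k, A i k ^ 2) * Real.sqrt (∑ k, A j k ^ 2)) ≤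
          c₁ * ((j : ℝ) + 1) ^ (-δ)) →
      q * ∏ j, Real.sqrt (∑ k, A j k ^ 2) ≤ |A.det| := by
  set p : ℝ := 2 * δ with hp
  set r : ℝ := 2 * c₁ ^ 2 * ((2 : ℝ) ^ (-p) + (2 : ℝ) ^ (-(p - 2)) / (p - 2)) with hr
  have hp2 : 2 < p := by rw [hp]; linarith
  have hr0 : 0 < r := by
    have h1 : (0:ℝ) < (2:ℝ) ^ (-p) := Real.rpow_pos_of_pos two_pos _
    have h2 : (0:ℝ) < (2:ℝ) ^ (-(p-2)) := Real.rpow_pos_of_pos two_pos _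
    have : (0:ℝ) < p - 2 := by linarith
    rw [hr]; positivity
  have hr1 : r < 1 := small_arith δ c₁ hδ hc₁ hsmall
  have hsr : Real.sqrt r < 1 := by
    rw [show (1:ℝ) = Real.sqrt 1 from (Real.sqrt_one).symm]
    exact Real.sqrt_lt_sqrt hr0.le hr1
  refine ⟨Real.exp (-(r / (1 - Real.sqrt r)) / 2), ⟨Real.exp_pos _, ?_⟩, ?_⟩
  · apply Real.exp_lt_one_iff.mpr
    have : 0 < 1 - Real.sqrt r := by linarith
    have : 0 < r / (1 - Real.sqrt r) := by positivity
    linarith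
  intro n A _ hnorm hip
  set q : ℝ := Real.exp (-(r / (1 - Real.sqrt r)) / 2) with hq
  set ν : Fin n → ℝ := fun i => Real.sqrt (∑ k, A i k ^ 2) with hν
  have hν1 : ∀ i, 1 ≤ ν i := hnorm
  have hν0 : ∀ i, 0 < ν i := fun i => lt_of_lt_of_le one_pos (hν1 i)
  have hνsq : ∀ i, ν i ^ 2 = ∑ k, A i k ^ 2 := fun i =>
    Real.sq_sqrt (Finset.sum_nonneg fun k _ => sq_nonneg _)
  set C : Matrix (Fin n) (Fin n) ℝ := Matrix.of fun i k => A i k / ν i with hC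
  set B : Matrix (Fin n) (Fin n) ℝ := C * C.conjTranspose with hBdef
  have hB : B.IsHermitian := Matrix.isHermitian_mul_conjTranspose_self C
  have hBij : ∀ i j, B i j = (∑ k, A i k * A j k) / (ν i * ν j) := by
    intro i j
    simp only [hBdef, Matrix.mul_apply, Matrix.conjTranspose_apply, hC, Matrix.of_apply,
      star_trivial, div_mul_div_comm]
    rw [← Finset.sum_div]
  have hBsymm : ∀ i j, B i j = B j i := by
    intro i j; rw [hBij, hBij]
    congr 1
    · exact Finset.sum_congr rfl fun k _ => mul_comm _ _
    · ring
  have hBii : ∀ i, B i i = 1 := by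
    intro i
    rw [hBij]
    rw [show (∑ k, A i k * A i k) = ∑ k, A i k ^ 2 from
      Finset.sum_congr rfl fun k _ => (sq (A i k)).symm]
    rw [← hνsq i]
    rw [sq, div_self (ne_of_gt (mul_pos (hν0 i) (hν0 i)))]
  -- off-diagonal bound
  have hBod : ∀ i j : Fin n, i < j → |B i j| ≤ c₁ * ((j : ℝ) + 1) ^ (-δ) := by
    intro i j hij
    rw [hBij, abs_div, abs_of_pos (mul_pos (hν0 i) (hν0 j))]
    exact hip i j hij
  -- entrywise square bound
  set β : Fin n → ℝ := fun j => c₁ ^ 2 * ((j : ℝ) + 1) ^ (-p) with hβ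
  have hβ0 : ∀ j, 0 ≤ β j := fun j => by
    have : (0:ℝ) < ((j:ℝ)+1) ^ (-p) := Real.rpow_pos_of_pos (by positivity) _
    positivity
  have hsq_bound : ∀ i j : Fin n, i < j → B i j ^ 2 ≤ β j := by
    intro i j hij
    have h1 := hBod i j hij
    have h2 : (0:ℝ) ≤ c₁ * ((j : ℝ) + 1) ^ (-δ) := by
      have : (0:ℝ) < ((j:ℝ)+1) ^ (-δ) := Real.rpow_pos_of_pos (by positivity) _
      positivity
    have h3 : B i j ^ 2 ≤ (c₁ * ((j : ℝ) + 1) ^ (-δ)) ^ 2 := by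
      rw [← sq_abs]
      exact pow_le_pow_left₀ (abs_nonneg _) h1 2
    have h5 : (((j:ℝ)+1) ^ (-δ)) ^ 2 = ((j:ℝ)+1) ^ (-p) := by
      rw [← Real.rpow_natCast (((j:ℝ)+1) ^ (-δ)) 2, ← Real.rpow_mul (by positivity)]
      congr 1
      rw [hp]; push_cast; ring
    have h4 : (c₁ * ((j : ℝ) + 1) ^ (-δ)) ^ 2 = β j := by
      rw [mul_pow, h5, hβ]
    rw [← h4]; exact h3
  -- trace identities
  have htr : B.trace = (n : ℝ) := by
    unfold Matrix.trace
    rw [Finset.sum_congr rfl fun i _ => show B.diag i = 1 from hBii i]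
    simp
  have htr2 : (B * B).trace ≤ (n : ℝ) + r := by
    have e1 : (B * B).trace = ∑ i, ∑ j, B i j ^ 2 := by
      rw [Matrix.trace]
      apply Finset.sum_congr rfl
      intro i _
      rw [Matrix.diag_apply, Matrix.mul_apply]
      exact Finset.sum_congr rfl fun j _ => by rw [← hBsymm i j, sq]
    rw [e1]
    have e2 : ∀ i j : Fin n, B i j ^ 2 ≤
        (if i < j then β j else 0) + (if j < i then β i else 0) +
          (if i = j then 1 else 0) := by
      intro i j
      rcases lt_trichotomy i j with h | h | h
      · simp only [if_pos h, if_neg (not_lt_of_gt h), if_neg (ne_of_lt h)]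
        rw [add_zero, add_zero]
        exact hsq_bound i j h
      · simp only [h, lt_irrefl, if_neg, if_pos rfl]
        simp [hBii j]
      · simp only [if_pos h, if_neg (not_lt_of_gt h), if_neg (ne_of_gt h)]
        rw [zero_add, add_zero]
        rw [hBsymm i j]
        exact hsq_bound j i h
    have e3 : ∑ i, ∑ j, B i j ^ 2 ≤
        ∑ i : Fin n, ∑ j : Fin n, ((if i < j then β j else 0) +
          (if j < i then β i else 0) + (if i = j then (1:ℝ) else 0)) :=
      Finset.sum_le_sum fun i _ => Finset.sum_le_sum fun j _ => e2 i j
    refine e3.trans ?_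
    -- split the sums
    have hfilter : ∀ j : Fin n, (Finset.univ.filter (fun i : Fin n => i < j)).card = (j:ℕ) := by
      intro j
      rw [show Finset.univ.filter (fun i : Fin n => i < j) = Finset.Iio j from by
        ext x; simp]
      exact Fin.card_Iio j
    have s1 : ∑ i : Fin n, ∑ j : Fin n, (if i < j then β j else 0) =
        ∑ j : Fin n, ((j:ℕ) : ℝ) * β j := by
      rw [Finset.sum_comm]
      apply Finset.sum_congr rfl
      intro j _
      rw [Finset.sum_ite, Finset.sum_const_zero, add_zero, Finset.sum_const, hfilter j,
        nsmul_eq_mul]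
    have s2 : ∑ i : Fin n, ∑ j : Fin n, (if j < i then β i else 0) =
        ∑ i : Fin n, ((i:ℕ) : ℝ) * β i := by
      apply Finset.sum_congr rfl
      intro i _
      rw [Finset.sum_ite, Finset.sum_const_zero, add_zero, Finset.sum_const, hfilter i,
        nsmul_eq_mul]
    have s3 : ∑ i : Fin n, ∑ j : Fin n, (if i = j then (1:ℝ) else 0) = (n : ℝ) := by
      simp
    simp only [Finset.sum_add_distrib]
    rw [s1, s2, s3]
    have key : ∑ j : Fin n, ((j:ℕ) : ℝ) * β j ≤ c₁ ^ 2 *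
        ((2:ℝ) ^ (-p) + (2:ℝ) ^ (-(p-2)) / (p-2)) := by
      have e4 : ∑ j : Fin n, ((j:ℕ) : ℝ) * β j =
          c₁ ^ 2 * ∑ j ∈ Finset.range n, (j : ℝ) * ((j : ℝ) + 1) ^ (-p) := by
        rw [Finset.mul_sum,
          ← Fin.sum_univ_eq_sum_range (fun m : ℕ => c₁^2 * ((m:ℝ) * ((m:ℝ)+1) ^ (-p))) n]
        exact Finset.sum_congr rfl fun j _ => by simp only [hβ]; ring
      rw [e4]
      have := series_bound hp2 n
      have hc2 : (0:ℝ) ≤ c₁ ^ 2 := sq_nonneg _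
      nlinarith
    rw [hr]
    linarith
  -- determinant relations
  have hdet := det_lb_of_traces B hB r hr0 hr1 htr htr2
  have hCA : C = Matrix.diagonal (fun i => (ν i)⁻¹) * A := by
    ext i k
    rw [Matrix.diagonal_mul, hC, Matrix.of_apply, div_eq_inv_mul]
  have hdetC : C.det = (∏ i, (ν i)⁻¹) * A.det := by
    rw [hCA, Matrix.det_mul, Matrix.det_diagonal]
  have hdetB : B.det = C.det ^ 2 := by
    rw [hBdef, Matrix.det_mul, Matrix.det_conjTranspose, star_trivial, pow_two]
  have hprod : (∏ i, (ν i)⁻¹) * (∏ i, ν i) = 1 := by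
    rw [← Finset.prod_mul_distrib]
    exact Finset.prod_eq_one fun i _ => inv_mul_cancel₀ (ne_of_gt (hν0 i))
  have hAdet : A.det ^ 2 = B.det * (∏ i, ν i) ^ 2 := by
    rw [hdetB, hdetC]
    calc A.det ^ 2 = ((∏ i, (ν i)⁻¹) * (∏ i, ν i)) ^ 2 * A.det ^ 2 := by
          rw [hprod]; ring
      _ = ((∏ i, (ν i)⁻¹) * A.det) ^ 2 * (∏ i, ν i) ^ 2 := by ring
  -- conclude
  have hq2 : q ^ 2 = Real.exp (-(r / (1 - Real.sqrt r))) := by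
    rw [hq, pow_two, ← Real.exp_add]; ring_nf
  have hP0 : 0 < ∏ i, ν i := Finset.prod_pos fun i _ => hν0 i
  have hfin : (q * ∏ i, ν i) ^ 2 ≤ |A.det| ^ 2 := by
    rw [mul_pow, sq_abs, hAdet, hq2]
    have := mul_le_mul_of_nonneg_right hdet (sq_nonneg (∏ i, ν i))
    linarith
  have hq0 : 0 < q := Real.exp_pos _
  nlinarith [hfin, abs_nonneg A.det, mul_pos hq0 hP0]
end

section
/- Let B be a symmetric positive n×n matrix with rows w_j of Euclidean norm at least 1, suppose |det B| ≥ q ∏_{j=1}^n ‖w_j‖ for some q ∈ (0,1), and let c ∈ ℝⁿ. Then the ratio −det([[B, c],[cᵀ, 0]]) / det(B) is at most (1/q) ‖c‖ · exp(‖c‖²/2). -/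
open Finset Real Matrix

lemma my_trace_eq_sum_eigenvalues {ι : Type*} [Fintype ι] [DecidableEq ι]
    {A : Matrix ι ι ℝ} (hA : A.IsHermitian) :
    A.trace = ∑ i, hA.eigenvalues i := by
  conv_lhs => rw [hA.spectral_theorem, Unitary.conjStarAlgAut_apply]
  rw [Matrix.trace_mul_cycle]
  have hU : (star (hA.eigenvectorUnitary : Matrix ι ι ℝ)) *
      (hA.eigenvectorUnitary : Matrix ι ι ℝ) = 1 :=
    Matrix.mem_unitaryGroup_iff'.mp hA.eigenvectorUnitary.2
  rw [hU, Matrix.one_mul]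
  simp [Matrix.trace_diagonal]

lemma my_det_sq_le_one {ι : Type*} [Fintype ι] [DecidableEq ι]
    (A : Matrix ι ι ℝ) (h : ∀ i, ∑ j, A i j ^ 2 ≤ 1) : A.det ^ 2 ≤ 1 := by
  set G := A * Aᵀ with hGdef
  have hG : G.PosSemidef := by
    have := Matrix.posSemidef_self_mul_conjTranspose A
    simpa [Matrix.conjTranspose_eq_transpose_of_trivial] using this
  have hdet : A.det ^ 2 = G.det := by rw [hGdef, Matrix.det_mul, Matrix.det_transpose, sq]
  have hprod : G.det = ∏ i, hG.1.eigenvalues i := by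
    simpa using hG.1.det_eq_prod_eigenvalues
  have htr : G.trace = ∑ i, hG.1.eigenvalues i := my_trace_eq_sum_eigenvalues hG.1
  have htr_le : G.trace ≤ (Fintype.card ι : ℝ) := by
    rw [Matrix.trace]
    have : ∀ i, Matrix.diag G i ≤ 1 := by
      intro i
      have : Matrix.diag G i = ∑ j, A i j ^ 2 := by
        simp [hGdef, Matrix.mul_apply, sq]
      rw [this]; exact h i
    calc ∑ i, Matrix.diag G i ≤ ∑ _i : ι, (1 : ℝ) := Finset.sum_le_sum fun i _ => this i
      _ = (Fintype.card ι : ℝ) := by simp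
  calc A.det ^ 2 = ∏ i, hG.1.eigenvalues i := by rw [hdet, hprod]
    _ ≤ ∏ i, Real.exp (hG.1.eigenvalues i - 1) := by
        refine Finset.prod_le_prod (fun i _ => hG.eigenvalues_nonneg i) (fun i _ => ?_)
        have := Real.add_one_le_exp (hG.1.eigenvalues i - 1)
        linarith
    _ = Real.exp (∑ i, (hG.1.eigenvalues i - 1)) := (Real.exp_sum _ _).symm
    _ ≤ 1 := by
        rw [Real.exp_le_one_iff, Finset.sum_sub_distrib]
        simp only [Finset.sum_const, Finset.card_univ, nsmul_eq_mul, mul_one]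
        have := htr_le
        rw [htr] at this
        linarith

/-- Hadamard's inequality for real matrices. -/
lemma my_hadamard {ι : Type*} [Fintype ι] [DecidableEq ι] (A : Matrix ι ι ℝ) :
    |A.det| ≤ ∏ i, Real.sqrt (∑ j, A i j ^ 2) := by
  by_cases hz : ∃ i, ∑ j, A i j ^ 2 = 0
  · obtain ⟨i, hi⟩ := hz
    have hrow : ∀ j, A i j = 0 := by
      intro j
      have h1 : ∀ k ∈ Finset.univ, (0:ℝ) ≤ A i k ^ 2 := fun k _ => sq_nonneg _
      have := (Finset.sum_eq_zero_iff_of_nonneg h1).mp hi j (Finset.mem_univ j)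
      exact pow_eq_zero_iff (by norm_num) |>.mp this
    have : A.det = 0 := Matrix.det_eq_zero_of_row_eq_zero i hrow
    rw [this, abs_zero]
    exact Finset.prod_nonneg fun i _ => Real.sqrt_nonneg _
  · push_neg at hz
    set r : ι → ℝ := fun i => Real.sqrt (∑ j, A i j ^ 2) with hr
    have hrpos : ∀ i, 0 < r i := by
      intro i
      exact Real.sqrt_pos.mpr (lt_of_le_of_ne (Finset.sum_nonneg fun j _ => sq_nonneg _)
        (Ne.symm (hz i)))
    set A' : Matrix ι ι ℝ := Matrix.of fun i j => A i j / r i with hA'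
    have hfac : A = Matrix.diagonal r * A' := by
      ext i j
      simp [hA', Matrix.mul_apply, Matrix.diagonal, Finset.sum_ite_eq,
        mul_div_cancel₀, (hrpos i).ne']
    have hrowA' : ∀ i, ∑ j, A' i j ^ 2 ≤ 1 := by
      intro i
      have hsq : r i ^ 2 = ∑ j, A i j ^ 2 := Real.sq_sqrt (Finset.sum_nonneg fun j _ => sq_nonneg _)
      have : ∑ j, A' i j ^ 2 = (∑ j, A i j ^ 2) / r i ^ 2 := by
        rw [Finset.sum_div]
        refine Finset.sum_congr rfl fun j _ => ?_
        simp [hA', div_pow]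
      rw [this, hsq, div_self (hz i)]
    have hdetA' : |A'.det| ≤ 1 := by
      have := my_det_sq_le_one A' hrowA'
      nlinarith [abs_nonneg A'.det, sq_abs A'.det]
    calc |A.det| = |(Matrix.diagonal r).det| * |A'.det| := by rw [hfac, Matrix.det_mul, abs_mul]
      _ ≤ |(Matrix.diagonal r).det| * 1 := by
          exact mul_le_mul_of_nonneg_left hdetA' (abs_nonneg _)
      _ = ∏ i, r i := by
          rw [mul_one, Matrix.det_diagonal, Finset.abs_prod]
          exact Finset.prod_congr rfl fun i _ => abs_of_pos (hrpos i)

/-- Corollary after Lemma 2: bound on the ratio of the bordered determinant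
`det [[B, c],[cᵀ, 0]]` to `det B`, for a symmetric matrix `B` whose rows have
Euclidean norm at least `1` and whose determinant satisfies the lower bound
`|det B| ≥ q ∏ ‖w_j‖`. -/
theorem bordered_determinant_ratio_bound
    (n : ℕ) (B : Matrix (Fin n) (Fin n) ℝ) (c : Fin n → ℝ) (q : ℝ)
    (hB : B.IsSymm) (hBdet : B.det ≠ 0)
    (hrow : ∀ j : Fin n, 1 ≤ Real.sqrt (∑ k, B j k ^ 2))
    (hq : q ∈ Set.Ioo (0 : ℝ) 1)
    (hdet : q * ∏ j, Real.sqrt (∑ k, B j k ^ 2) ≤ |B.det|) :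
    -(Matrix.fromBlocks B (Matrix.replicateCol Unit c) (Matrix.replicateRow Unit c)
          (0 : Matrix Unit Unit ℝ)).det / B.det ≤
      (1 / q) * Real.sqrt (∑ i, c i ^ 2) *
        Real.exp ((∑ i, c i ^ 2) / 2) := by
  obtain ⟨hq0, hq1⟩ := hq
  set M := Matrix.fromBlocks B (Matrix.replicateCol Unit c) (Matrix.replicateRow Unit c)
      (0 : Matrix Unit Unit ℝ) with hM
  set S := ∑ i, c i ^ 2 with hS
  have hS0 : 0 ≤ S := Finset.sum_nonneg fun i _ => sq_nonneg _
  set P := ∏ j, Real.sqrt (∑ k, B j k ^ 2) with hP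
  have hP1 : (1:ℝ) ≤ P := by
    calc (1:ℝ) = ∏ _j : Fin n, (1:ℝ) := by simp
      _ ≤ P := Finset.prod_le_prod (by intros; norm_num) (fun j _ => hrow j)
  have hP0 : 0 < P := lt_of_lt_of_le one_pos hP1
  -- Hadamard bound for M
  have hHad : |M.det| ≤ ∏ i, Real.sqrt (∑ j, M i j ^ 2) := my_hadamard M
  -- compute the product of row norms of M
  have hsum_inl : ∀ j : Fin n, ∑ k, M (Sum.inl j) k ^ 2 = (∑ k, B j k ^ 2) + c j ^ 2 := by
    intro j
    rw [Fintype.sum_sum_type]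
    simp [hM]
  have hsum_inr : ∀ u : Unit, ∑ k, M (Sum.inr u) k ^ 2 = S := by
    intro u
    rw [Fintype.sum_sum_type]
    simp [hM, hS]
  have hprodM : ∏ i, Real.sqrt (∑ j, M i j ^ 2) =
      (∏ j : Fin n, Real.sqrt ((∑ k, B j k ^ 2) + c j ^ 2)) * Real.sqrt S := by
    rw [Fintype.prod_sum_type]
    congr 1
    · exact Finset.prod_congr rfl fun j _ => by rw [hsum_inl j]
    · simp [hsum_inr]
  -- bound each row norm
  have hrow_bound : ∀ j : Fin n, Real.sqrt ((∑ k, B j k ^ 2) + c j ^ 2) ≤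
      Real.sqrt (∑ k, B j k ^ 2) * Real.exp (c j ^ 2 / 2) := by
    intro j
    have hnn : (0:ℝ) ≤ ∑ k, B j k ^ 2 := Finset.sum_nonneg fun k _ => sq_nonneg _
    have ha1 : (1:ℝ) ≤ ∑ k, B j k ^ 2 := by
      have := hrow j
      nlinarith [Real.sq_sqrt hnn, Real.sqrt_nonneg (∑ k, B j k ^ 2)]
    have hle : (∑ k, B j k ^ 2) + c j ^ 2 ≤ (∑ k, B j k ^ 2) * Real.exp (c j ^ 2) := by
      have h1 : (1:ℝ) + c j ^ 2 ≤ Real.exp (c j ^ 2) := by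
        have := Real.add_one_le_exp (c j ^ 2); linarith
      nlinarith [sq_nonneg (c j)]
    calc Real.sqrt ((∑ k, B j k ^ 2) + c j ^ 2)
        ≤ Real.sqrt ((∑ k, B j k ^ 2) * Real.exp (c j ^ 2)) := Real.sqrt_le_sqrt hle
      _ = Real.sqrt (∑ k, B j k ^ 2) * Real.sqrt (Real.exp (c j ^ 2)) :=
          Real.sqrt_mul (by linarith) _
      _ = Real.sqrt (∑ k, B j k ^ 2) * Real.exp (c j ^ 2 / 2) := by
          congr 1
          exact (Real.exp_half _).symm
  have hprod_bound : (∏ j : Fin n, Real.sqrt ((∑ k, B j k ^ 2) + c j ^ 2)) ≤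
      P * Real.exp (S / 2) := by
    calc (∏ j : Fin n, Real.sqrt ((∑ k, B j k ^ 2) + c j ^ 2))
        ≤ ∏ j : Fin n, Real.sqrt (∑ k, B j k ^ 2) * Real.exp (c j ^ 2 / 2) :=
          Finset.prod_le_prod (fun j _ => Real.sqrt_nonneg _) (fun j _ => hrow_bound j)
      _ = P * ∏ j : Fin n, Real.exp (c j ^ 2 / 2) := by
          rw [Finset.prod_mul_distrib]
      _ = P * Real.exp (S / 2) := by
          rw [← Real.exp_sum, ← Finset.sum_div]
  have hMfinal : |M.det| ≤ P * Real.exp (S / 2) * Real.sqrt S := by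
    calc |M.det| ≤ ∏ i, Real.sqrt (∑ j, M i j ^ 2) := hHad
      _ = (∏ j : Fin n, Real.sqrt ((∑ k, B j k ^ 2) + c j ^ 2)) * Real.sqrt S := hprodM
      _ ≤ P * Real.exp (S / 2) * Real.sqrt S :=
          mul_le_mul_of_nonneg_right hprod_bound (Real.sqrt_nonneg _)
  -- combine
  have hqP : 0 < q * P := mul_pos hq0 hP0
  have step1 : -M.det / B.det ≤ |M.det| / |B.det| := by
    rw [neg_div, ← abs_div]
    exact neg_le_abs _
  have step2 : |M.det| / |B.det| ≤ (P * Real.exp (S / 2) * Real.sqrt S) / (q * P) :=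
    div_le_div₀ (by positivity) hMfinal hqP hdet
  have step3 : (P * Real.exp (S / 2) * Real.sqrt S) / (q * P) =
      (1 / q) * Real.sqrt S * Real.exp (S / 2) := by
    field_simp
  calc -M.det / B.det ≤ |M.det| / |B.det| := step1
    _ ≤ (P * Real.exp (S / 2) * Real.sqrt S) / (q * P) := step2
    _ = (1 / q) * Real.sqrt S * Real.exp (S / 2) := step3
end

section
/- Let Q be differentiable on (x₀, ∞) with Q(z)/z ≤ (1/A) Q'(z) for some A > 1 and Q increasing and positive. Then for x₀ < a < b: ∫_a^b Q(z)²/z² dz ≤ (1/(2A−1)) (Q(b)²/b − Q(a)²/a). -/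
open Real intervalIntegral

/-- The integration-by-parts estimate from Lemma 8 (`S₁₃`): if `Q` is positive,
increasing and satisfies `Q(z)/z ≤ (1/A) Q'(z)` on `(x₀,∞)` with `A > 1`, then
`∫_a^b Q(z)²/z² dz ≤ (1/(2A-1)) (Q(b)²/b − Q(a)²/a)` for `x₀ < a < b`. -/
theorem freud_exponent_integral_bound
    (Q Q' : ℝ → ℝ) (A x₀ a b : ℝ)
    (hA : 1 < A) (hx₀ : 0 ≤ x₀) (hab : x₀ < a) (hab' : a < b)
    (hderiv : ∀ z ∈ Set.Ioi x₀, HasDerivAt Q (Q' z) z)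
    (hQpos : ∀ z ∈ Set.Ioi x₀, 0 < Q z)
    (hQmono : MonotoneOn Q (Set.Ioi x₀))
    (hQratio : ∀ z ∈ Set.Ioi x₀, Q z / z ≤ (1 / A) * Q' z) :
    (∫ z in a..b, Q z ^ 2 / z ^ 2) ≤
      (1 / (2 * A - 1)) * (Q b ^ 2 / b - Q a ^ 2 / a) := by
  have h2A : 0 < 2 * A - 1 := by linarith
  have hsub : Set.Icc a b ⊆ Set.Ioi x₀ := fun z hz => lt_of_lt_of_le hab hz.1
  have hzpos : ∀ z ∈ Set.Icc a b, 0 < z := fun z hz =>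
    lt_of_le_of_lt hx₀ (hsub hz)
  set g : ℝ → ℝ := fun z => (1 / (2 * A - 1)) * (Q z ^ 2 / z) with hg
  have hQcont : ContinuousOn Q (Set.Icc a b) := fun z hz =>
    ((hderiv z (hsub hz)).continuousAt).continuousWithinAt
  have hgcont : ContinuousOn g (Set.Icc a b) := by
    apply ContinuousOn.mul continuousOn_const
    exact ((hQcont.pow 2).div continuousOn_id (fun z hz => (hzpos z hz).ne'))
  have hgderiv : ∀ z ∈ Set.Ioo a b,
      HasDerivWithinAt g
        ((1 / (2 * A - 1)) * ((2 * Q z * Q' z * z - Q z ^ 2) / z ^ 2)) (Set.Ioi z) z := by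
    intro z hz
    have hzI : z ∈ Set.Ioi x₀ := lt_of_lt_of_le hab hz.1.le
    have hz0 : z ≠ 0 := (lt_of_le_of_lt hx₀ hzI).ne'
    have h1 : HasDerivAt (fun z => Q z ^ 2 / z)
        ((2 * Q z ^ (2-1) * Q' z * z - Q z ^ 2 * 1) / z ^ 2) z :=
      HasDerivAt.div ((hderiv z hzI).pow 2) (hasDerivAt_id z) hz0
    have h2 := (h1.const_mul (1 / (2 * A - 1))).hasDerivWithinAt (s := Set.Ioi z)
    convert h2 using 2
    · rfl
    · rfl
    · ring
  have hφint : MeasureTheory.IntegrableOn (fun z => Q z ^ 2 / z ^ 2) (Set.Icc a b) := by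
    apply ContinuousOn.integrableOn_Icc
    exact (hQcont.pow 2).div (continuousOn_id.pow 2)
      (fun z hz => pow_ne_zero 2 (hzpos z hz).ne')
  have hle : ∀ z ∈ Set.Ioo a b, Q z ^ 2 / z ^ 2 ≤
      (1 / (2 * A - 1)) * ((2 * Q z * Q' z * z - Q z ^ 2) / z ^ 2) := by
    intro z hz
    have hzI : z ∈ Set.Ioi x₀ := lt_of_lt_of_le hab hz.1.le
    have hz0 : (0:ℝ) < z := lt_of_le_of_lt hx₀ hzI
    have hQ := hQpos z hzI
    have hr := hQratio z hzI
    -- A * (Q z / z) ≤ Q' z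
    have hAQ : A * (Q z / z) ≤ Q' z := by
      have hA0 : (0:ℝ) < A := by linarith
      rw [div_mul_eq_mul_div, le_div_iff₀ hA0, mul_comm] at hr
      linarith [hr]
    have h3 : A * Q z ^ 2 ≤ Q z * Q' z * z := by
      have := mul_le_mul_of_nonneg_left hAQ (le_of_lt hQ)
      have h4 := mul_le_mul_of_nonneg_right this (le_of_lt hz0)
      calc A * Q z ^ 2 = Q z * (A * (Q z / z)) * z := by field_simp
        _ ≤ Q z * Q' z * z := h4
    have key : Q z ^ 2 ≤ 1 / (2 * A - 1) * (2 * Q z * Q' z * z - Q z ^ 2) := by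
      rw [one_div, inv_mul_eq_div, le_div_iff₀ h2A]
      nlinarith
    rw [← mul_div_assoc]
    gcongr
  have := intervalIntegral.integral_le_sub_of_hasDeriv_right_of_le hab'.le hgcont hgderiv
    hφint hle
  calc (∫ z in a..b, Q z ^ 2 / z ^ 2) ≤ g b - g a := this
    _ = (1 / (2 * A - 1)) * (Q b ^ 2 / b - Q a ^ 2 / a) := by rw [hg]; ring
end
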